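/- For 1 ≤ k ≤ ⌊n/2⌋ and k < r < n−k, the space of ℚ-valued Minkowski weights on codimension-r cones of the normal fan of the hypersimplex Δ(k,n) has dimension ∑_{i=0}^{k-1} C(n,i). -/

import Mathlib

open Finset

/-- Pairs `(I,J)` of disjoint subsets of `{1,…,n}` with `|I|+|J| = n−r−1`,
`|I| < k`, `|J| < n−k`, indexing codimension-`r` cones of the normal fan of
the hypersimplex `Δ(k,n)`. -/
def Pairs (n k r : ℕ) : Type :=
  {p : Finset (Fin n) × Finset (Fin n) //
    Disjoint p.1 p.2 ∧ p.1.card + p.2.card = n - r - 1 ∧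
      p.1.card < k ∧ p.2.card < n - k}

/-- The three balancing conditions defining a Minkowski weight of
codimension `r` on the normal fan of `Δ(k,n)`. -/
def IsMinkowskiWeight (n k r : ℕ) (c : Pairs n k r → ℚ) : Prop :=
  (∀ (p q s t : Pairs n k r) (A B : Finset (Fin n)) (x y : Fin n),
      x ≠ y → x ∉ A ∪ B → y ∉ A ∪ B → A.card < k - 1 → B.card < n - k - 1 →
      p.1 = (insert x A, B) → q.1 = (insert y A, B) →
      s.1 = (A, insert x B) → t.1 = (A, insert y B) →
      c p - c q = c s - c t) ∧
  (∀ p q : Pairs n k r, p.1.1.card = k - 1 → p.1.1 = q.1.1 → c p = c q) ∧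
  (∀ p q : Pairs n k r, p.1.2.card = n - k - 1 → p.1.2 = q.1.2 → c p = c q)

/-- The space of `ℚ`-valued Minkowski weights on codimension-`r` cones of the
normal fan of `Δ(k,n)`, as a `ℚ`-subspace of the function space. -/
def MinkowskiWeights (n k r : ℕ) : Submodule ℚ (Pairs n k r → ℚ) where
  carrier := {c | IsMinkowskiWeight n k r c}
  zero_mem' := by
    refine ⟨fun _ _ _ _ _ _ _ _ _ _ _ _ _ _ _ _ => by simp,
      fun _ _ _ _ => rfl, fun _ _ _ _ => rfl⟩
  add_mem' := by
    rintro a b ⟨ha1, ha2, ha3⟩ ⟨hb1, hb2, hb3⟩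
    refine ⟨fun p q s t A B x y h1 h2 h3 h4 h5 h6 h7 h8 h9 => ?_,
      fun p q h h' => ?_, fun p q h h' => ?_⟩
    · have := ha1 p q s t A B x y h1 h2 h3 h4 h5 h6 h7 h8 h9
      have := hb1 p q s t A B x y h1 h2 h3 h4 h5 h6 h7 h8 h9
      simp only [Pi.add_apply]; linarith
    · simp only [Pi.add_apply, ha2 p q h h', hb2 p q h h']
    · simp only [Pi.add_apply, ha3 p q h h', hb3 p q h h']
  smul_mem' := by
    rintro m a ⟨ha1, ha2, ha3⟩
    refine ⟨fun p q s t A B x y h1 h2 h3 h4 h5 h6 h7 h8 h9 => ?_,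
      fun p q h h' => ?_, fun p q h h' => ?_⟩
    · have := ha1 p q s t A B x y h1 h2 h3 h4 h5 h6 h7 h8 h9
      simp only [Pi.smul_apply, smul_eq_mul]
      linear_combination m * this
    · simp only [Pi.smul_apply, ha2 p q h h']
    · simp only [Pi.smul_apply, ha3 p q h h']

namespace Stmt12Aux

noncomputable def phi (n r : ℕ) (I : Finset (Fin n)) : Finset (Fin n) :=
  (Finset.exists_subset_card_eq (s := Iᶜ) (n := n - r - 1 - I.card)
    (by rw [Finset.card_compl, Fintype.card_fin]; omega)).choose

lemma phi_subset (n r : ℕ) (I : Finset (Fin n)) : phi n r I ⊆ Iᶜ :=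
  (Finset.exists_subset_card_eq (s := Iᶜ) (n := n - r - 1 - I.card)
    (by rw [Finset.card_compl, Fintype.card_fin]; omega)).choose_spec.1

lemma phi_card (n r : ℕ) (I : Finset (Fin n)) : (phi n r I).card = n - r - 1 - I.card :=
  (Finset.exists_subset_card_eq (s := Iᶜ) (n := n - r - 1 - I.card)
    (by rw [Finset.card_compl, Fintype.card_fin]; omega)).choose_spec.2

lemma phi_disjoint (n r : ℕ) (I : Finset (Fin n)) : Disjoint I (phi n r I) := by
  rw [Finset.disjoint_right]
  intro a ha
  have := phi_subset n r I ha
  simpa using this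

/-- Subsets of size `< k`. -/
abbrev SS (n k : ℕ) := {S : Finset (Fin n) // S.card < k}

/-- Canonical pair `(I, φ(I))`. -/
noncomputable def cpair {n k r : ℕ} (h1 : k ≤ n - r - 1) (h2 : n - r - 1 + k + 2 ≤ n)
    (I : Finset (Fin n)) (hI : I.card < k) : Pairs n k r :=
  ⟨(I, phi n r I), phi_disjoint n r I,
    by show I.card + (phi n r I).card = _; rw [phi_card]; omega, hI,
    by show (phi n r I).card < _; rw [phi_card]; omega⟩

noncomputable def E {n : ℕ} (k : ℕ) (h : SS n k → ℚ) (S : Finset (Fin n)) : ℚ :=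
  if hS : S.card < k then h ⟨S, hS⟩ else 0

/-- `F h I J = ∑_{I ⊆ S ⊆ I∪J, |S| < k} h(S)`. -/
noncomputable def F {n : ℕ} (k : ℕ) (h : SS n k → ℚ) (I J : Finset (Fin n)) : ℚ :=
  ∑ S ∈ (I ∪ J).powerset.filter (fun S => I ⊆ S ∧ S.card < k), E k h S

lemma E_add {n k : ℕ} (a b : SS n k → ℚ) (S : Finset (Fin n)) :
    E k (a + b) S = E k a S + E k b S := by
  unfold E; split <;> simp

lemma E_smul {n k : ℕ} (m : ℚ) (a : SS n k → ℚ) (S : Finset (Fin n)) :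
    E k (m • a) S = m * E k a S := by
  unfold E; split <;> simp

/-- Key splitting identity. -/
lemma F_insert {n k : ℕ} (h : SS n k → ℚ) {A B : Finset (Fin n)} {x : Fin n}
    (hxA : x ∉ A) (hxB : x ∉ B) :
    F k h A (insert x B) = F k h A B + F k h (insert x A) B := by
  unfold F
  have hU : A ∪ insert x B = insert x (A ∪ B) := by
    ext a; simp [or_comm, or_assoc, or_left_comm]
  have hU2 : insert x A ∪ B = insert x (A ∪ B) := by
    ext a; simp [or_assoc]
  rw [hU, hU2]
  have hsplit : (insert x (A ∪ B)).powerset.filter (fun S => A ⊆ S ∧ S.card < k) =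
      ((A ∪ B).powerset.filter (fun S => A ⊆ S ∧ S.card < k)) ∪
      ((insert x (A ∪ B)).powerset.filter (fun S => insert x A ⊆ S ∧ S.card < k)) := by
    ext S
    simp only [Finset.mem_filter, Finset.mem_powerset, Finset.mem_union, Finset.insert_subset_iff]
    constructor
    · rintro ⟨hS, hAS, hck⟩
      by_cases hx : x ∈ S
      · exact Or.inr ⟨hS, ⟨hx, hAS⟩, hck⟩
      · refine Or.inl ⟨fun a ha => ?_, hAS, hck⟩
        rcases Finset.mem_insert.mp (hS ha) with h' | h'
        · exact absurd (h' ▸ ha) hx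
        · exact h'
    · rintro (⟨hS, hAS, hck⟩ | ⟨hS, ⟨hx, hAS⟩, hck⟩)
      · exact ⟨hS.trans (Finset.subset_insert _ _), hAS, hck⟩
      · exact ⟨hS, hAS, hck⟩
  rw [hsplit, Finset.sum_union]
  rw [Finset.disjoint_left]
  intro S hS1 hS2
  simp only [Finset.mem_filter, Finset.mem_powerset] at hS1 hS2
  have hx : x ∈ S := hS2.2.1 (Finset.mem_insert_self x A)
  have := hS1.1 hx
  simp only [Finset.mem_union] at this
  rcases this with h' | h'
  · exact hxA h'
  · exact hxB h'

/-- When `|I| = k-1` the sum collapses to the single term `h(I)`. -/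
lemma F_top {n k : ℕ} (h : SS n k → ℚ) {I : Finset (Fin n)} (hI : I.card + 1 = k)
    (J : Finset (Fin n)) : F k h I J = E k h I := by
  unfold F
  have : (I ∪ J).powerset.filter (fun S => I ⊆ S ∧ S.card < k) = {I} := by
    ext S
    simp only [Finset.mem_filter, Finset.mem_powerset, Finset.mem_singleton]
    constructor
    · rintro ⟨-, hIS, hck⟩
      exact (Finset.eq_of_subset_of_card_le hIS (by omega)).symm
    · rintro rfl
      exact ⟨Finset.subset_union_left, Finset.Subset.refl _, by omega⟩
  rw [this, Finset.sum_singleton]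

/-- `F` defines a Minkowski weight. -/
lemma L_mem {n k r : ℕ} (h1 : k ≤ n - r - 1) (h2 : n - r - 1 + k + 2 ≤ n)
    (h : SS n k → ℚ) :
    IsMinkowskiWeight n k r (fun p => F k h p.1.1 p.1.2) := by
  refine ⟨?_, ?_, ?_⟩
  · intro p q s t A B x y hxy hxAB hyAB hA hB hp hq hs ht
    simp only [Finset.mem_union, not_or] at hxAB hyAB
    simp only [hp, hq, hs, ht]
    rw [F_insert h hxAB.1 hxAB.2, F_insert h hyAB.1 hyAB.2]
    ring
  · intro p q hcard heq
    have hk : p.1.1.card < k := p.2.2.2.1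
    have hc1 : p.1.1.card + 1 = k := by omega
    have hc2 : q.1.1.card + 1 = k := by rw [← heq]; omega
    simp only
    rw [F_top h hc1, F_top h hc2, heq]
  · intro p q hcard _
    exfalso
    have h3 := p.2.2.1
    have h4 := p.2.2.2.1
    omega

lemma mu_lt {a b d e nn : ℕ} (hb : b < a) (hd : d ≤ nn) :
    b * (nn + 1) + d < a * (nn + 1) + e := by
  have h1 : b * (nn + 1) + d < (b + 1) * (nn + 1) := by
    have : (b + 1) * (nn + 1) = b * (nn + 1) + (nn + 1) := by ring
    omega
  have h2 : (b + 1) * (nn + 1) ≤ a * (nn + 1) := Nat.mul_le_mul_right _ hb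
  omega

/-- A Minkowski weight vanishing on all canonical pairs vanishes. -/
lemma weight_eq_zero {n k r : ℕ} (h1 : k ≤ n - r - 1) (h2 : n - r - 1 + k + 2 ≤ n)
    {c : Pairs n k r → ℚ} (hc : IsMinkowskiWeight n k r c)
    (h0 : ∀ q : Pairs n k r, q.1.2 = phi n r q.1.1 → c q = 0) :
    ∀ p, c p = 0 := by
  suffices H : ∀ N (p : Pairs n k r),
      (k - p.1.1.card) * (n + 1) + (p.1.2 \ phi n r p.1.1).card < N → c p = 0 by
    intro p; exact H _ p (Nat.lt_succ_self _)
  intro N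
  induction N with
  | zero => intro p hp; omega
  | succ N IH =>
    rintro ⟨⟨I, J⟩, hprop⟩ hp
    simp only at hp
    have hdisj : Disjoint I J := hprop.1
    have hsum : I.card + J.card = n - r - 1 := hprop.2.1
    have hIk : I.card < k := hprop.2.2.1
    have hJk : J.card < n - k := hprop.2.2.2
    have hpI : (phi n r I).card = n - r - 1 - I.card := phi_card n r I
    by_cases hJc : J = phi n r I
    · exact h0 ⟨(I, J), hprop⟩ hJc
    by_cases htop : I.card + 1 = k
    · -- top level: use condition (ii)
      let q0 : Pairs n k r := ⟨(I, phi n r I), phi_disjoint n r I,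
          by show I.card + (phi n r I).card = _; omega, hIk,
          by show (phi n r I).card < _; omega⟩
      have hq0 : c q0 = 0 := h0 q0 rfl
      have := hc.2.1 ⟨(I, J), hprop⟩ q0 (by show I.card = _; omega) rfl
      rw [this, hq0]
    · -- main case: exchange
      have hcardJ : J.card = n - r - 1 - I.card := by omega
      have hxne : (J \ phi n r I).Nonempty := by
        rcases Finset.eq_empty_or_nonempty (J \ phi n r I) with he | hne
        · exfalso
          have hsub : J ⊆ phi n r I := by
            intro a ha
            by_contra hnot
            have : a ∈ J \ phi n r I := Finset.mem_sdiff.mpr ⟨ha, hnot⟩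
            simp [he] at this
          exact hJc (Finset.eq_of_subset_of_card_le hsub (by omega))
        · exact hne
      obtain ⟨x, hx⟩ := hxne
      rw [Finset.mem_sdiff] at hx
      have hyne : (phi n r I \ J).Nonempty := by
        rcases Finset.eq_empty_or_nonempty (phi n r I \ J) with he | hne
        · exfalso
          have hsub : phi n r I ⊆ J := by
            intro a ha
            by_contra hnot
            have : a ∈ phi n r I \ J := Finset.mem_sdiff.mpr ⟨ha, hnot⟩
            simp [he] at this
          exact hJc (Finset.eq_of_subset_of_card_le hsub (by omega)).symm
        · exact hne
      obtain ⟨y, hy⟩ := hyne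
      rw [Finset.mem_sdiff] at hy
      set B := J.erase x with hBdef
      have hxI : x ∉ I := Finset.disjoint_right.mp hdisj hx.1
      have hyI : y ∉ I := by
        have := phi_subset n r I hy.1
        simpa using this
      have hxy : x ≠ y := fun hh => hx.2 (hh ▸ hy.1)
      have hxB : x ∉ B := Finset.notMem_erase x J
      have hBJ : B ⊆ J := Finset.erase_subset x J
      have hyB : y ∉ B := fun hh => hy.2 (hBJ hh)
      have hJpos : 0 < J.card := Finset.card_pos.mpr ⟨x, hx.1⟩
      have hBcard : B.card = J.card - 1 := Finset.card_erase_of_mem hx.1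
      have hins : insert x B = J := Finset.insert_erase hx.1
      have hdisjIB : Disjoint I B := hdisj.mono_right hBJ
      have hxIcard : (insert x I).card = I.card + 1 := Finset.card_insert_of_notMem hxI
      have hyIcard : (insert y I).card = I.card + 1 := Finset.card_insert_of_notMem hyI
      have hyBcard : (insert y B).card = B.card + 1 := Finset.card_insert_of_notMem hyB
      let pp : Pairs n k r := ⟨(insert x I, B),
        Finset.disjoint_insert_left.mpr ⟨hxB, hdisjIB⟩,
        by show (insert x I).card + B.card = _; omega,
        by show (insert x I).card < _; omega,
        by show B.card < _; omega⟩
      let qq : Pairs n k r := ⟨(insert y I, B),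
        Finset.disjoint_insert_left.mpr ⟨hyB, hdisjIB⟩,
        by show (insert y I).card + B.card = _; omega,
        by show (insert y I).card < _; omega,
        by show B.card < _; omega⟩
      let tt : Pairs n k r := ⟨(I, insert y B),
        Finset.disjoint_insert_right.mpr ⟨hyI, hdisjIB⟩,
        by show I.card + (insert y B).card = _; omega,
        by show I.card < _; omega,
        by show (insert y B).card < _; omega⟩
      have key := hc.1 pp qq ⟨(I, J), hprop⟩ tt I B x y hxy
        (by simp [hxI, hxB]) (by simp [hyI, hyB]) (by omega) (by omega)
        rfl rfl (by show (I, J) = (I, insert x B); rw [hins]) rfl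
      have hcle : ∀ (S : Finset (Fin n)), S.card ≤ n := fun S => by
        simpa using Finset.card_le_univ S
      have hpp : c pp = 0 := by
        apply IH
        have hb : k - (insert x I).card < k - I.card := by omega
        exact lt_of_lt_of_le (mu_lt (e := (J \ phi n r I).card) hb (hcle _)) (by omega)
      have hqq : c qq = 0 := by
        apply IH
        have hb : k - (insert y I).card < k - I.card := by omega
        exact lt_of_lt_of_le (mu_lt (e := (J \ phi n r I).card) hb (hcle _)) (by omega)
      have htt : c tt = 0 := by
        apply IH
        have hss : insert y B \ phi n r I ⊂ J \ phi n r I := by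
          rw [Finset.ssubset_iff_of_subset]
          · exact ⟨x, Finset.mem_sdiff.mpr ⟨hx.1, hx.2⟩, by
              simp only [Finset.mem_sdiff, Finset.mem_insert, not_and, not_not]
              intro hmem
              rcases hmem with hh | hh
              · exact absurd hh hxy
              · exact absurd hh hxB⟩
          · intro a ha
            rw [Finset.mem_sdiff] at ha ⊢
            rcases Finset.mem_insert.mp ha.1 with hh | hh
            · exact absurd (hh ▸ hy.1) ha.2
            · exact ⟨hBJ hh, ha.2⟩
        have hlt := Finset.card_lt_card hss
        show (k - I.card) * (n + 1) + (insert y B \ phi n r I).card < N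
        omega
      linarith [key, hpp, hqq, htt]

/-- Unitriangularity: if all canonical values of `F h` vanish then `h = 0`. -/
lemma T_inj {n k : ℕ} (phi : Finset (Fin n) → Finset (Fin n)) (h : SS n k → ℚ)
    (hh : ∀ I : SS n k, F k h I.1 (phi I.1) = 0) : ∀ I, h I = 0 := by
  suffices H : ∀ d (I : SS n k), k - I.1.card ≤ d → h I = 0 by
    intro I; exact H k I (by omega)
  intro d
  induction d with
  | zero => intro I hI; exact absurd hI (by have := I.2; omega)
  | succ d IH =>
    intro I hI
    have hmem : I.1 ∈ (I.1 ∪ phi I.1).powerset.filter (fun S => I.1 ⊆ S ∧ S.card < k) := by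
      simp only [Finset.mem_filter, Finset.mem_powerset]
      exact ⟨Finset.subset_union_left, Finset.Subset.refl _, I.2⟩
    have hsplit := Finset.add_sum_erase _ (E k h) hmem
    have hFI := hh I
    unfold F at hFI
    rw [← hsplit] at hFI
    have hzero : ∀ S ∈ ((I.1 ∪ phi I.1).powerset.filter
        (fun S => I.1 ⊆ S ∧ S.card < k)).erase I.1, E k h S = 0 := by
      intro S hS
      rw [Finset.mem_erase, Finset.mem_filter, Finset.mem_powerset] at hS
      obtain ⟨hne, -, hIS, hck⟩ := hS
      have hlt : I.1.card < S.card :=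
        Finset.card_lt_card (Finset.ssubset_iff_subset_ne.mpr ⟨hIS, (Ne.symm hne)⟩)
      unfold E
      rw [dif_pos hck]
      exact IH ⟨S, hck⟩ (by simp only; omega)
    rw [Finset.sum_eq_zero hzero, add_zero] at hFI
    unfold E at hFI
    rw [dif_pos I.2] at hFI
    rwa [show (⟨I.1, I.2⟩ : SS n k) = I from Subtype.ext rfl] at hFI

lemma card_SS (n k : ℕ) : Fintype.card (SS n k) = ∑ i ∈ Finset.range k, n.choose i := by
  rw [Fintype.card_subtype]
  have heq : (Finset.univ.filter fun S : Finset (Fin n) => S.card < k)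
      = (Finset.range k).biUnion (fun i => Finset.powersetCard i Finset.univ) := by
    ext S
    simp only [Finset.mem_filter, Finset.mem_univ, true_and, Finset.mem_biUnion,
      Finset.mem_range, Finset.mem_powersetCard]
    constructor
    · intro hS; exact ⟨S.card, hS, Finset.subset_univ S, rfl⟩
    · rintro ⟨i, hi, -, rfl⟩; exact hi
  rw [heq, Finset.card_biUnion]
  · refine Finset.sum_congr rfl fun i _ => ?_
    rw [Finset.card_powersetCard, Finset.card_univ, Fintype.card_fin]
  · intro a _ b _ hab
    show Disjoint _ _
    rw [Finset.disjoint_left]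
    intro S hSa hSb
    rw [Finset.mem_powersetCard] at hSa hSb
    exact hab (hSa.2 ▸ hSb.2)

end Stmt12Aux

theorem stmt12 (n k r : ℕ) (hk1 : 1 ≤ k) (hk2 : k ≤ n / 2)
    (hr1 : k < r) (hr2 : r < n - k) :
    Module.finrank ℚ (MinkowskiWeights n k r)
      = ∑ i ∈ Finset.range k, n.choose i := by
  classical
  have h1 : k ≤ n - r - 1 := by omega
  have h2 : n - r - 1 + k + 2 ≤ n := by omega
  let Res : (Pairs n k r → ℚ) →ₗ[ℚ] (Stmt12Aux.SS n k → ℚ) :=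
    { toFun := fun c I => c (Stmt12Aux.cpair h1 h2 I.1 I.2)
      map_add' := fun _ _ => rfl
      map_smul' := fun _ _ => rfl }
  let L : (Stmt12Aux.SS n k → ℚ) →ₗ[ℚ] (Pairs n k r → ℚ) :=
    { toFun := fun h p => Stmt12Aux.F k h p.1.1 p.1.2
      map_add' := by
        intro a b; funext p
        simp [Stmt12Aux.F, Stmt12Aux.E_add, Finset.sum_add_distrib]
      map_smul' := by
        intro m a; funext p
        simp [Stmt12Aux.F, Stmt12Aux.E_smul, Finset.mul_sum] }
  have hLmem : ∀ h, L h ∈ MinkowskiWeights n k r := fun h => Stmt12Aux.L_mem h1 h2 h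
  let e : MinkowskiWeights n k r →ₗ[ℚ] (Stmt12Aux.SS n k → ℚ) :=
    Res ∘ₗ (MinkowskiWeights n k r).subtype
  have einj : Function.Injective e := by
    rw [injective_iff_map_eq_zero]
    intro c hce
    have hc : IsMinkowskiWeight n k r c.1 := c.2
    have h0 : ∀ q : Pairs n k r, q.1.2 = Stmt12Aux.phi n r q.1.1 → c.1 q = 0 := by
      intro q hq
      have hqk : q.1.1.card < k := q.2.2.2.1
      have hqe : q = Stmt12Aux.cpair h1 h2 q.1.1 hqk :=
        Subtype.ext (Prod.ext_iff.mpr ⟨rfl, hq⟩)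
      rw [hqe]
      exact congrFun hce ⟨q.1.1, hqk⟩
    exact Subtype.ext (funext (Stmt12Aux.weight_eq_zero h1 h2 hc h0))
  have esurj : Function.Surjective e := by
    have hT : Function.Injective (Res ∘ₗ L) := by
      rw [injective_iff_map_eq_zero]
      intro h hh
      funext I
      show h I = 0
      exact Stmt12Aux.T_inj (Stmt12Aux.phi n r) h (fun I' => congrFun hh I') I
    have hTs : Function.Surjective (Res ∘ₗ L) := LinearMap.injective_iff_surjective.mp hT
    intro g
    obtain ⟨h, hh⟩ := hTs g
    exact ⟨⟨L h, hLmem h⟩, hh⟩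
  rw [LinearEquiv.finrank_eq (LinearEquiv.ofBijective e ⟨einj, esurj⟩),
    Module.finrank_fintype_fun_eq_card, Stmt12Aux.card_SS]
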